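/- Let p be a prime, k the algebraic closure of F_p, and f ∈ k[x] of degree d = p^a·N with p ∤ N and N > 1. Suppose a_d·(x-1)^e·(x^{d-1}+x^{d-2}+...+1) = b₀·μ(x)^m in k[x] for some polynomial μ, constants a_d, b₀ ≠ 0, integer m ≥ 2, and e ∈ {0,2} with m dividing e + d - 1. Then this leads to a contradiction; i.e., no such factorization exists unless N = 1 (d is a power of p). -/
import Mathlib


open Polynomial

lemma rootMult_pow {k : Type*} [Field k] (q : Polynomial k) (hq : q ≠ 0) (x : k) (n : ℕ) :
    rootMultiplicity x (q ^ n) = n * rootMultiplicity x q := by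
  induction n with
  | zero => simp [rootMultiplicity_eq_zero, IsRoot]
  | succ n ih =>
    rw [pow_succ, rootMultiplicity_mul (mul_ne_zero (pow_ne_zero _ hq) hq), ih]
    ring


/-- Key step: over an algebraically closed field of characteristic `p`, if
`d = p^a·N` with `p ∤ N`, `N > 1`, then there is no factorization
`a_d·(x-1)^e·(x^{d-1} + ... + 1) = b₀·μ(x)^m` with `a_d, b₀ ≠ 0`, `m ≥ 2`,
`e ∈ {0,2}`, and `m ∣ e + d - 1`. -/
theorem stmt13 (p : ℕ) (hp : p.Prime) (k : Type*) [Field k] [IsAlgClosed k] [CharP k p]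
    (a N : ℕ) (hN : ¬ p ∣ N) (hN1 : 1 < N)
    (d : ℕ) (hd : d = p ^ a * N)
    (ad b₀ : k) (had : ad ≠ 0) (hb₀ : b₀ ≠ 0)
    (m e : ℕ) (hm : 2 ≤ m) (he : e = 0 ∨ e = 2) (hdvd : m ∣ e + d - 1)
    (μ : Polynomial k)
    (heq : C ad * (X - 1) ^ e * ∑ i ∈ Finset.range d, X ^ i = C b₀ * μ ^ m) :
    False := by
  classical
  have hNk : (N : k) ≠ 0 := fun h => hN ((CharP.cast_eq_zero_iff k p N).mp h)
  have hXN : (X ^ N - 1 : Polynomial k) ≠ 0 := by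
    intro h
    have h2 : ((X : Polynomial k) ^ N - C 1).natDegree = N := natDegree_X_pow_sub_C
    rw [map_one, h] at h2
    simp at h2
    omega
  have hsep : (X ^ N - 1 : Polynomial k).Separable := by
    simpa using separable_X_pow_sub_C (F := k) (1 : k) hNk one_ne_zero
  set SN : Polynomial k := ∑ i ∈ Finset.range N, X ^ i with hSN
  have hmulN : SN * (X - 1) = X ^ N - 1 := by
    simpa using geom_sum_mul (X : Polynomial k) N
  have hSNne : SN ≠ 0 := by
    intro h
    rw [h, zero_mul] at hmulN
    exact hXN hmulN.symm
  have hX1ne : (X - 1 : Polynomial k) ≠ 0 := by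
    simpa using X_sub_C_ne_zero (1 : k)
  have hdegSN : SN.degree ≠ 0 := by
    have h1 : (SN * (X - 1)).natDegree = N := by
      rw [hmulN]
      have := natDegree_X_pow_sub_C (n := N) (r := (1:k))
      rwa [map_one] at this
    have h2 : (SN * (X - 1)).natDegree = SN.natDegree + 1 := by
      rw [natDegree_mul hSNne hX1ne]
      have : (X - 1 : Polynomial k).natDegree = 1 := by
        simpa using natDegree_X_sub_C (1:k)
      omega
    intro h
    have := Polynomial.natDegree_eq_zero_iff_degree_le_zero.mpr (le_of_eq h)
    omega
  obtain ⟨ζ, hζ⟩ := IsAlgClosed.exists_root SN hdegSN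
  have hζN : ζ ^ N = 1 := by
    have h := congrArg (fun q => Polynomial.eval ζ q) hmulN
    simp only [eval_mul, eval_sub, eval_pow, eval_X, eval_one, hζ.eq_zero, zero_mul] at h
    linear_combination -h
  have hζ1 : ζ ≠ 1 := by
    intro h
    have h1 : SN.eval 1 = (N : k) := by simp [hSN, eval_finset_sum]
    rw [h] at hζ
    exact hNk (h1 ▸ hζ)
  have hroot : (X ^ N - 1 : Polynomial k).IsRoot ζ := by simp [IsRoot, hζN]
  have hrm1 : rootMultiplicity ζ (X ^ N - 1 : Polynomial k) = 1 := by
    have hle := count_roots_le_one hsep ζ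
    rw [count_roots] at hle
    have hge : 1 ≤ rootMultiplicity ζ (X ^ N - 1 : Polynomial k) :=
      (rootMultiplicity_pos hXN).mpr hroot
    omega
  -- X^d - 1 = (X^N - 1)^(p^a)
  haveI := Fact.mk hp
  have hfrob : (X ^ d - 1 : Polynomial k) = (X ^ N - 1) ^ (p ^ a) := by
    have h := sub_pow_char_pow (R := Polynomial k) (p := p) (n := a) (x := X ^ N) (y := 1)
    rw [one_pow, ← pow_mul] at h
    rw [hd, mul_comm (p ^ a) N, h]
  -- root multiplicity of ζ in S_d := geom sum of length d is p^a
  set Sd : Polynomial k := ∑ i ∈ Finset.range d, X ^ i with hSd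
  have hmulD : Sd * (X - 1) = X ^ d - 1 := by
    simpa using geom_sum_mul (X : Polynomial k) d
  have hXd : (X ^ d - 1 : Polynomial k) ≠ 0 := by
    rw [hfrob]; exact pow_ne_zero _ hXN
  have hSdne : Sd ≠ 0 := by
    intro h
    rw [h, zero_mul] at hmulD
    exact hXd hmulD.symm
  have hrmX1 : rootMultiplicity ζ (X - 1 : Polynomial k) = 0 := by
    apply rootMultiplicity_eq_zero
    intro h
    exact hζ1 (by simpa [IsRoot, sub_eq_zero] using h)
  have hrmSd : rootMultiplicity ζ Sd = p ^ a := by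
    have h1 : rootMultiplicity ζ (Sd * (X - 1)) =
        rootMultiplicity ζ Sd + rootMultiplicity ζ (X - 1) :=
      rootMultiplicity_mul (mul_ne_zero hSdne hX1ne)
    rw [hmulD, hfrob, rootMult_pow _ hXN, hrm1, mul_one, hrmX1, add_zero] at h1
    omega
  -- μ ≠ 0
  have hLne : C ad * (X - 1) ^ e * Sd ≠ 0 :=
    mul_ne_zero (mul_ne_zero (by simpa using had) (pow_ne_zero _ hX1ne)) hSdne
  have hμne : μ ≠ 0 := by
    intro h
    rw [h] at heq
    rw [heq] at hLne
    apply hLne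
    have : (0:Polynomial k) ^ m = 0 := zero_pow (by omega)
    rw [this, mul_zero]
  -- compute root multiplicities of both sides
  have hL : rootMultiplicity ζ (C ad * (X - 1) ^ e * Sd) = p ^ a := by
    rw [rootMultiplicity_mul hLne,
      rootMultiplicity_mul (mul_ne_zero (by simpa using had) (pow_ne_zero _ hX1ne)),
      rootMultiplicity_C, rootMult_pow _ hX1ne, hrmX1, hrmSd]
    ring
  have hR : rootMultiplicity ζ (C b₀ * μ ^ m) = m * rootMultiplicity ζ μ := by
    rw [rootMultiplicity_mul (by
        exact mul_ne_zero (by simpa using hb₀) (pow_ne_zero _ hμne)),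
      rootMultiplicity_C, rootMult_pow _ hμne, zero_add]
  have hkey : m ∣ p ^ a := by
    refine ⟨rootMultiplicity ζ μ, ?_⟩
    rw [← hR, ← heq, hL]
  -- conclude
  obtain ⟨b, hb, hmb⟩ := (Nat.dvd_prime_pow hp).mp hkey
  have hb0 : b ≠ 0 := by rintro rfl; simp at hmb; omega
  have hpm : p ∣ m := hmb ▸ dvd_pow_self p hb0
  have hpd : p ∣ d := by
    rw [hd]
    exact Dvd.dvd.mul_right (dvd_pow_self p (by omega)) N
  have hd2 : 2 ≤ d := by
    have : 1 ≤ p ^ a := Nat.one_le_pow _ _ hp.pos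
    calc 2 ≤ N := hN1
    _ = 1 * N := (one_mul N).symm
    _ ≤ p ^ a * N := Nat.mul_le_mul_right N this
    _ = d := hd.symm
  have hped : p ∣ e + d - 1 := hpm.trans hdvd
  rcases he with rfl | rfl
  · -- p ∣ d - 1 and p ∣ d
    simp only [Nat.zero_add] at hped
    have : p ∣ d - (d - 1) := Nat.dvd_sub hpd hped
    rw [Nat.sub_sub_self (by omega)] at this
    exact hp.one_lt.ne' (Nat.eq_one_of_dvd_one this ▸ rfl)
  · -- p ∣ d + 1 and p ∣ d
    have h1 : 2 + d - 1 = d + 1 := by omega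
    rw [h1] at hped
    have h3 : p ∣ d + 1 - d := Nat.dvd_sub hped hpd
    have h4 : d + 1 - d = 1 := by omega
    rw [h4] at h3
    have := Nat.eq_one_of_dvd_one h3
    have := hp.one_lt
    omega
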